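/- Let I(t) denote the number of orbits of the cyclic shift group ℤ/2t acting on T_{2t} = ⋃_{m|t} T_{2t,m}. Then (2^t - Σ_{k|t, k≠t} 2^k)/(2t) ≤ I(t) ≤ Σ_{m|t} 2^m/(2m), and consequently I(t) ~ 2^{t-1}/t as t → ∞. -/

import Mathlib

/-- The set `T_{2t} = ⋃_{m ∣ t} T_{2t,m}` of anti-periodic `±1` sequences of length `2t`. -/
def Tset (t : ℕ) : Set (ZMod (2 * t) → ℤ) :=
  {α | (∀ i, α i = 1 ∨ α i = -1) ∧
    ∃ m : ℕ, m ∣ t ∧ ∀ i, α ((m : ZMod (2 * t)) + i) = -α i}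

/-- The cyclic shift relation on `T_{2t}`: `β` is a cyclic shift of `α`. -/
def shiftRel (t : ℕ) (α β : Tset t) : Prop :=
  ∃ k : ZMod (2 * t), ∀ i, (β : ZMod (2 * t) → ℤ) i = (α : ZMod (2 * t) → ℤ) (i - k)

/-- `I(t)`: the number of orbits of the cyclic shift group on `T_{2t}`, i.e. the
number of inert conjugacy classes of word length `4t`. -/
noncomputable def Icount (t : ℕ) : ℕ := Nat.card (Quot (shiftRel t))

section Aux

variable {t : ℕ}

/-- `d` is a (natural-number) period of `α`. -/
def isPer (t : ℕ) (α : ZMod (2 * t) → ℤ) (d : ℕ) : Prop :=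
  ∀ i, α ((d : ZMod (2 * t)) + i) = α i

/-- `m` is an anti-period of `α`. -/
def isAPer (t : ℕ) (α : ZMod (2 * t) → ℤ) (m : ℕ) : Prop :=
  ∀ i, α ((m : ZMod (2 * t)) + i) = -α i

lemma shift_mem_Tset (k : ZMod (2 * t)) {α : ZMod (2 * t) → ℤ} (hα : α ∈ Tset t) :
    (fun i => α (i - k)) ∈ Tset t := by
  obtain ⟨h1, m, hm, h2⟩ := hα
  refine ⟨fun i => h1 _, m, hm, fun i => ?_⟩
  simpa [add_sub_assoc] using h2 (i - k)

lemma shift_isAPer (k : ZMod (2 * t)) {α : ZMod (2 * t) → ℤ} {m : ℕ} (h : isAPer t α m) :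
    isAPer t (fun i => α (i - k)) m := fun i => by
  simpa [add_sub_assoc] using h (i - k)

lemma shiftRel_equiv (t : ℕ) : Equivalence (shiftRel t) := by
  constructor
  · exact fun α => ⟨0, fun i => by simp⟩
  · rintro α β ⟨k, h⟩
    exact ⟨-k, fun i => by rw [h]; ring_nf⟩
  · rintro α β γ ⟨k, h⟩ ⟨k', h'⟩
    refine ⟨k + k', fun i => ?_⟩
    rw [h', h]; ring_nf

/-- The subgroup of periods. -/
def perGroup (t : ℕ) (α : ZMod (2 * t) → ℤ) : AddSubgroup (ZMod (2 * t)) where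
  carrier := {x | ∀ i, α (x + i) = α i}
  zero_mem' := fun i => by simp
  add_mem' := by
    intro a b ha hb i
    rw [add_assoc, ha, hb]
  neg_mem' := by
    intro a ha i
    have := ha (-a + i)
    simpa using this.symm

lemma isPer_gcd {α : ZMod (2 * t) → ℤ} {a b : ℕ} (ha : isPer t α a) (hb : isPer t α b) :
    isPer t α (Nat.gcd a b) := by
  have key : ((Nat.gcd a b : ℕ) : ZMod (2 * t)) ∈ perGroup t α := by
    have h := Nat.gcd_eq_gcd_ab a b
    have h2 : ((Nat.gcd a b : ℕ) : ZMod (2 * t)) =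
        Nat.gcdA a b • ((a : ℕ) : ZMod (2 * t)) + Nat.gcdB a b • ((b : ℕ) : ZMod (2 * t)) := by
      have := congrArg (fun z : ℤ => (z : ZMod (2 * t))) h
      push_cast at this
      rw [zsmul_eq_mul, zsmul_eq_mul]
      rw [this]; ring
    rw [h2]
    exact AddSubgroup.add_mem _ (AddSubgroup.zsmul_mem _ ha _) (AddSubgroup.zsmul_mem _ hb _)
  exact key

lemma isPer_nat_mul {α : ZMod (2 * t) → ℤ} {a : ℕ} (ha : isPer t α a) (s : ℕ) :
    isPer t α (a * s) := by
  induction s with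
  | zero => intro i; simp
  | succ s ih =>
    intro i
    have : ((a * (s + 1) : ℕ) : ZMod (2 * t)) = ((a * s : ℕ) : ZMod (2 * t)) + (a : ZMod (2 * t)) := by
      push_cast; ring
    rw [this, add_assoc, ih, ha]

lemma isPer_of_dvd {α : ZMod (2 * t) → ℤ} {a b : ℕ} (ha : isPer t α a) (hab : a ∣ b) :
    isPer t α b := by
  obtain ⟨s, rfl⟩ := hab
  exact isPer_nat_mul ha s

lemma aper_pow {α : ZMod (2 * t) → ℤ} {m : ℕ} (h : isAPer t α m) (q : ℕ) :
    ∀ i, α (((m * q : ℕ) : ZMod (2 * t)) + i) = (-1) ^ q * α i := by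
  induction q with
  | zero => intro i; simp
  | succ q ih =>
    intro i
    have e : ((m * (q + 1) : ℕ) : ZMod (2 * t)) = ((m * q : ℕ) : ZMod (2 * t)) + (m : ZMod (2 * t)) := by
      push_cast; ring
    rw [e, add_assoc, ih, h]
    ring

lemma isPer_two_mul_of_aper {α : ZMod (2 * t) → ℤ} {m : ℕ} (h : isAPer t α m) :
    isPer t α (2 * m) := by
  intro i
  have e : ((2 * m : ℕ) : ZMod (2 * t)) = (m : ZMod (2 * t)) + (m : ZMod (2 * t)) := by
    push_cast; ring
  rw [e, add_assoc, h, h]; ring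

/-- Key lemma: if `m` is the minimal anti-period dividing `t`, then every period is a
multiple of `2 * m`. -/
lemma two_mul_dvd_of_isPer (ht : t ≠ 0) {α : ZMod (2 * t) → ℤ}
    (hpm : ∀ i, α i = 1 ∨ α i = -1) {m : ℕ} (hm : m ∣ t) (ham : isAPer t α m)
    (hmin : ∀ m', m' ∣ t → isAPer t α m' → m ≤ m') {d : ℕ} (hd : isPer t α d) :
    2 * m ∣ d := by
  have hm0 : m ≠ 0 := by rintro rfl; exact ht (Nat.eq_zero_of_zero_dvd hm)
  set g := Nat.gcd d (2 * m) with hg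
  have hgper : isPer t α g := isPer_gcd hd (isPer_two_mul_of_aper ham)
  have hgdvd2m : g ∣ 2 * m := Nat.gcd_dvd_right _ _
  have hgdvdd : g ∣ d := Nat.gcd_dvd_left _ _
  have hg0 : g ≠ 0 := by
    intro h0
    have := Nat.eq_zero_of_gcd_eq_zero_right h0
    omega
  have notdvd : ¬ g ∣ m := by
    intro hgm
    have hPm : isPer t α m := isPer_of_dvd hgper hgm
    have h1 := hPm 0
    have h2 := ham 0
    rcases hpm 0 with h0 | h0 <;> rw [h0] at h1 h2 <;> omega
  have hgeven : 2 ∣ g := by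
    by_contra hodd
    have hc : Nat.Coprime 2 g := (Nat.Prime.coprime_iff_not_dvd Nat.prime_two).mpr hodd
    exact notdvd (hc.symm.dvd_of_dvd_mul_left hgdvd2m)
  clear_value g
  obtain ⟨h, rfl⟩ : ∃ h, g = 2 * h := hgeven
  obtain ⟨s, hs2⟩ := hgdvd2m
  have hs : m = h * s := by
    have : 2 * m = 2 * (h * s) := by rw [hs2]; ring
    omega
  have hh0 : h ≠ 0 := by omega
  have hhm : h ∣ m := ⟨s, hs⟩
  have hhm' : h ≤ m := Nat.le_of_dvd (Nat.pos_of_ne_zero hm0) hhm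
  have hsodd : ¬ 2 ∣ s := by
    rintro ⟨u, hu⟩
    exact notdvd ⟨u, by rw [hs, hu]; ring⟩
  obtain ⟨u, hu⟩ : ∃ u, s = 2 * u + 1 := ⟨(s - 1) / 2, by omega⟩
  have hper_mh : isPer t α (m - h) := by
    refine isPer_of_dvd hgper ⟨u, ?_⟩
    have hmu : m = 2 * (h * u) + h := by rw [hs, hu]; ring
    rw [hmu, Nat.add_sub_cancel, mul_assoc]
  have haph : isAPer t α h := by
    intro i
    have e : ((m : ℕ) : ZMod (2 * t)) = ((m - h : ℕ) : ZMod (2 * t)) + ((h : ℕ) : ZMod (2 * t)) := by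
      rw [← Nat.cast_add]
      congr 1
      omega
    have h2 := hper_mh ((h : ZMod (2 * t)) + i)
    rw [← add_assoc, ← e] at h2
    rw [← h2]
    exact ham i
  have hle : m ≤ h := hmin h (dvd_trans hhm hm) haph
  have hhem : h = m := le_antisymm hhm' hle
  subst hhem
  exact hgdvdd


lemma aper_det (ht : t ≠ 0) {α : ZMod (2 * t) → ℤ} {m : ℕ} (h : isAPer t α m)
    (j : ZMod (2 * t)) :
    α j = (-1) ^ (ZMod.val j / m) * α ((ZMod.val j % m : ℕ) : ZMod (2 * t)) := by
  haveI : NeZero (2 * t) := ⟨by omega⟩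
  have hj : ((ZMod.val j : ℕ) : ZMod (2 * t)) = j := ZMod.natCast_rightInverse j
  have e : ((ZMod.val j : ℕ) : ZMod (2 * t)) =
      ((m * (ZMod.val j / m) : ℕ) : ZMod (2 * t)) + ((ZMod.val j % m : ℕ) : ZMod (2 * t)) := by
    rw [← Nat.cast_add, Nat.div_add_mod]
  conv_lhs => rw [← hj, e]
  rw [aper_pow h]

lemma card_aper_le (ht : t ≠ 0) {m : ℕ} (hm0 : m ≠ 0) :
    Nat.card {f : ZMod (2 * t) → ℤ // (∀ i, f i = 1 ∨ f i = -1) ∧ isAPer t f m} ≤ 2 ^ m := by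
  classical
  haveI : NeZero (2 * t) := ⟨by omega⟩
  have hinj : Function.Injective
      (fun (f : {f : ZMod (2 * t) → ℤ // (∀ i, f i = 1 ∨ f i = -1) ∧ isAPer t f m}) =>
        (fun i : Fin m => decide (f.1 (((i : ℕ) : ZMod (2 * t))) = 1))) := by
    intro f g hfg
    apply Subtype.ext
    funext j
    rw [aper_det ht f.2.2 j, aper_det ht g.2.2 j]
    have hlt : ZMod.val j % m < m := Nat.mod_lt _ (Nat.pos_of_ne_zero hm0)
    have := congrFun hfg ⟨ZMod.val j % m, hlt⟩
    simp only [decide_eq_decide] at this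
    rcases f.2.1 ((ZMod.val j % m : ℕ) : ZMod (2 * t)) with h1 | h1 <;>
      rcases g.2.1 ((ZMod.val j % m : ℕ) : ZMod (2 * t)) with h2 | h2 <;>
      simp_all
  calc Nat.card {f : ZMod (2 * t) → ℤ // (∀ i, f i = 1 ∨ f i = -1) ∧ isAPer t f m}
      ≤ Nat.card (Fin m → Bool) := Nat.card_le_card_of_injective _ hinj
    _ = 2 ^ m := by simp [Nat.card_eq_fintype_card]

lemma finite_Tset (ht : t ≠ 0) : (Tset t).Finite := by
  haveI : NeZero (2 * t) := ⟨by omega⟩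
  apply Set.Finite.subset (Set.finite_Icc (fun _ : ZMod (2 * t) => (-1 : ℤ)) fun _ => 1)
  rintro α ⟨h1, -⟩
  rw [Set.mem_Icc]
  constructor <;> intro i <;> rcases h1 i with h | h <;> simp [h]

lemma val_tadd (ht : t ≠ 0) (j : ZMod (2 * t)) :
    letI : NeZero (2 * t) := ⟨by omega⟩
    (((t : ℕ) : ZMod (2 * t)) + j).val = if j.val < t then j.val + t else j.val - t := by
  haveI : NeZero (2 * t) := ⟨by omega⟩
  have hj := ZMod.val_lt j
  rw [ZMod.val_add, ZMod.val_natCast_of_lt (by omega)]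
  by_cases hlt : j.val < t
  · rw [if_pos hlt, Nat.mod_eq_of_lt (by omega)]
    omega
  · rw [if_neg hlt, Nat.mod_eq_sub_mod (by omega), Nat.mod_eq_of_lt (by omega)]
    omega

lemma lower_card (ht : t ≠ 0) : 2 ^ t ≤ Nat.card (Tset t) := by
  classical
  haveI : NeZero (2 * t) := ⟨by omega⟩
  haveI : Finite ↥(Tset t) := (finite_Tset ht).to_subtype
  set φ : (Fin t → Bool) → (ZMod (2 * t) → ℤ) := fun ε j =>
    (if j.val < t then (1 : ℤ) else -1) *
      (if ε ⟨j.val % t, Nat.mod_lt _ (Nat.pos_of_ne_zero ht)⟩ then 1 else -1) with hφ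
  have hmem : ∀ ε, φ ε ∈ Tset t := by
    intro ε
    refine ⟨fun i => by rw [hφ]; dsimp only; split <;> split <;> norm_num, t, dvd_refl t, ?_⟩
    intro i
    have hv := val_tadd ht i
    have hi := ZMod.val_lt i
    rw [hφ]
    dsimp only
    rw [hv]
    by_cases hlt : i.val < t
    · rw [if_pos hlt]
      have h1 : ¬ (i.val + t < t) := by omega
      have h2 : (i.val + t) % t = i.val % t := Nat.add_mod_right _ _
      rw [if_neg h1]
      have h3 : (⟨(i.val + t) % t, Nat.mod_lt _ (Nat.pos_of_ne_zero ht)⟩ : Fin t) =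
          ⟨i.val % t, Nat.mod_lt _ (Nat.pos_of_ne_zero ht)⟩ := by
        apply Fin.ext; exact h2
      rw [h3, if_pos hlt]
      ring
    · rw [if_neg hlt]
      have h1 : i.val - t < t := by omega
      have h2 : (i.val - t) % t = i.val % t := by
        conv_rhs => rw [Nat.mod_eq_sub_mod (by omega)]
      rw [if_pos h1]
      have h3 : (⟨(i.val - t) % t, Nat.mod_lt _ (Nat.pos_of_ne_zero ht)⟩ : Fin t) =
          ⟨i.val % t, Nat.mod_lt _ (Nat.pos_of_ne_zero ht)⟩ := by
        apply Fin.ext; exact h2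
      rw [h3, if_neg hlt]
      ring
  have hinj : Function.Injective (fun ε => (⟨φ ε, hmem ε⟩ : ↥(Tset t))) := by
    intro ε ε' h
    funext i
    have this0 := congrFun (congrArg Subtype.val h) ((i : ℕ) : ZMod (2 * t))
    have this : (if (((i : ℕ) : ZMod (2 * t))).val < t then (1 : ℤ) else -1) *
          (if ε ⟨(((i : ℕ) : ZMod (2 * t))).val % t, Nat.mod_lt _ (Nat.pos_of_ne_zero ht)⟩
            then 1 else -1) =
        (if (((i : ℕ) : ZMod (2 * t))).val < t then (1 : ℤ) else -1) *
          (if ε' ⟨(((i : ℕ) : ZMod (2 * t))).val % t, Nat.mod_lt _ (Nat.pos_of_ne_zero ht)⟩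
            then 1 else -1) := this0
    have hival : (((i : ℕ) : ZMod (2 * t))).val = (i : ℕ) := ZMod.val_natCast_of_lt (by omega)
    have hX : (⟨(((i : ℕ) : ZMod (2 * t))).val % t, Nat.mod_lt _ (Nat.pos_of_ne_zero ht)⟩ : Fin t) = i := by
      apply Fin.ext
      simp only [hival]
      exact Nat.mod_eq_of_lt i.2
    rw [hX] at this
    have hc : (((i : ℕ) : ZMod (2 * t))).val < t := by rw [hival]; exact i.2
    rw [if_pos hc] at this
    by_cases h1 : ε i <;> by_cases h2 : ε' i <;>
      simp [h1, h2] at this ⊢ <;> norm_num at this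
  calc (2 : ℕ) ^ t = Nat.card (Fin t → Bool) := by simp [Nat.card_eq_fintype_card]
    _ ≤ Nat.card ↥(Tset t) := Nat.card_le_card_of_injective _ hinj

lemma card_Tset_le (ht : t ≠ 0) :
    Nat.card (Tset t) ≤ Nat.card (Quot (shiftRel t)) * (2 * t) := by
  haveI : NeZero (2 * t) := ⟨by omega⟩
  haveI : Finite ↥(Tset t) := (finite_Tset ht).to_subtype
  have hsurj : Function.Surjective (fun p : Quot (shiftRel t) × ZMod (2 * t) =>
      (⟨fun i => (Quot.out p.1).1 (i - p.2), shift_mem_Tset p.2 (Quot.out p.1).2⟩ : ↥(Tset t))) := by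
    intro b
    obtain ⟨k, hk⟩ : shiftRel t (Quot.out (Quot.mk _ b)) b :=
      ((shiftRel_equiv t).eqvGen_iff).1 (Quot.eqvGen_exact (Quot.out_eq (Quot.mk _ b)))
    exact ⟨(Quot.mk _ b, k), Subtype.ext (funext fun i => (hk i).symm)⟩
  calc Nat.card ↥(Tset t) ≤ Nat.card (Quot (shiftRel t) × ZMod (2 * t)) :=
        Nat.card_le_card_of_surjective _ hsurj
    _ = Nat.card (Quot (shiftRel t)) * (2 * t) := by rw [Nat.card_prod, Nat.card_zmod]

open scoped Classical in
/-- minimal anti-period (among divisors of `t`) of the chosen representative. -/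
noncomputable def minAP (t : ℕ) (c : Quot (shiftRel t)) : ℕ :=
  Nat.find (Quot.out c).2.2

lemma minAP_spec (c : Quot (shiftRel t)) :
    minAP t c ∣ t ∧ isAPer t (Quot.out c).1 (minAP t c) := by
  classical
  exact Nat.find_spec (Quot.out c).2.2

lemma minAP_min (c : Quot (shiftRel t)) {m' : ℕ} (h1 : m' ∣ t)
    (h2 : isAPer t (Quot.out c).1 m') : minAP t c ≤ m' := by
  classical
  exact Nat.find_min' _ ⟨h1, h2⟩


lemma fiber_card (ht : t ≠ 0) {m : ℕ} (hm0 : m ≠ 0) :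
    Nat.card {c : Quot (shiftRel t) // minAP t c = m} * (2 * m) ≤ 2 ^ m := by
  classical
  haveI : NeZero (2 * t) := ⟨by omega⟩
  haveI : NeZero (2 * m) := ⟨by omega⟩
  haveI : Finite ↥(Tset t) := (finite_Tset ht).to_subtype
  set A := {f : ZMod (2 * t) → ℤ // (∀ i, f i = 1 ∨ f i = -1) ∧ isAPer t f m} with hA
  set F : {c : Quot (shiftRel t) // minAP t c = m} × ZMod (2 * m) → A := fun p =>
    ⟨fun i => (Quot.out p.1.1).1 (i - ((ZMod.val p.2 : ℕ) : ZMod (2 * t))),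
      ⟨fun i => (Quot.out p.1.1).2.1 _,
        shift_isAPer _ (by have h2 := (minAP_spec p.1.1).2; rw [p.1.2] at h2; exact h2)⟩⟩ with hF
  -- key sub-step : if the shifted representatives agree and `k'.val ≤ k.val` then `k = k'`
  have aux : ∀ (c : Quot (shiftRel t)) (hc : minAP t c = m) (k k' : ZMod (2 * m)),
      ZMod.val k' ≤ ZMod.val k →
      (∀ i, (Quot.out c).1 (i - ((ZMod.val k : ℕ) : ZMod (2 * t))) =
        (Quot.out c).1 (i - ((ZMod.val k' : ℕ) : ZMod (2 * t)))) → k = k' := by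
    intro c hc k k' hle hfun
    have hper : isPer t (Quot.out c).1 (ZMod.val k - ZMod.val k') := by
      intro i
      have h1 := hfun (i + ((ZMod.val k : ℕ) : ZMod (2 * t)))
      have e : ((ZMod.val k - ZMod.val k' : ℕ) : ZMod (2 * t)) =
          ((ZMod.val k : ℕ) : ZMod (2 * t)) - ((ZMod.val k' : ℕ) : ZMod (2 * t)) :=
        Nat.cast_sub hle
      rw [add_sub_cancel_right] at h1
      rw [e]
      rw [h1]
      congr 1
      ring
    have hdvd : 2 * m ∣ ZMod.val k - ZMod.val k' := by
      refine two_mul_dvd_of_isPer ht (Quot.out c).2.1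
        (by rw [← hc]; exact (minAP_spec c).1)
        (by rw [← hc]; exact (minAP_spec c).2) ?_ hper
      intro m' h1 h2
      rw [← hc]
      exact minAP_min c h1 h2
    have hlt : ZMod.val k - ZMod.val k' < 2 * m := by
      have := ZMod.val_lt k
      omega
    have h0 : ZMod.val k - ZMod.val k' = 0 := Nat.eq_zero_of_dvd_of_lt hdvd hlt
    exact ZMod.val_injective _ (by omega)
  have hinj : Function.Injective F := by
    rintro ⟨⟨c, hc⟩, k⟩ ⟨⟨c', hc'⟩, k'⟩ h
    have hfun : ∀ i, (Quot.out c).1 (i - ((ZMod.val k : ℕ) : ZMod (2 * t))) =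
        (Quot.out c').1 (i - ((ZMod.val k' : ℕ) : ZMod (2 * t))) :=
      fun i => congrFun (congrArg Subtype.val h) i
    have hcc : c = c' := by
      have hrel : shiftRel t (Quot.out c) (Quot.out c') := by
        refine ⟨((ZMod.val k : ℕ) : ZMod (2 * t)) - ((ZMod.val k' : ℕ) : ZMod (2 * t)),
          fun j => ?_⟩
        have := hfun (j + ((ZMod.val k' : ℕ) : ZMod (2 * t)))
        rw [add_sub_cancel_right] at this
        rw [← this]
        congr 1
        ring
      rw [← Quot.out_eq c, ← Quot.out_eq c']
      exact Quot.sound hrel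
    subst hcc
    have hk : k = k' := by
      rcases le_total (ZMod.val k') (ZMod.val k) with hle | hle
      · exact aux c hc k k' hle hfun
      · exact (aux c hc k' k hle fun i => (hfun i).symm).symm
    simp [hk]
  calc Nat.card {c : Quot (shiftRel t) // minAP t c = m} * (2 * m)
      = Nat.card ({c : Quot (shiftRel t) // minAP t c = m} × ZMod (2 * m)) := by
        rw [Nat.card_prod, Nat.card_zmod]
    _ ≤ Nat.card A := by
        haveI : Finite A := by
          have hfin : {f : ZMod (2 * t) → ℤ | (∀ i, f i = 1 ∨ f i = -1) ∧ isAPer t f m}.Finite := by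
            apply Set.Finite.subset (Set.finite_Icc (fun _ : ZMod (2 * t) => (-1 : ℤ)) fun _ => 1)
            rintro f ⟨h1, -⟩
            rw [Set.mem_Icc]
            constructor <;> intro i <;> rcases h1 i with h | h <;> simp [h]
          exact hfin.to_subtype
        exact Nat.card_le_card_of_injective F hinj
    _ ≤ 2 ^ m := card_aper_le ht hm0


lemma card_quot_sum (ht : t ≠ 0) :
    Nat.card (Quot (shiftRel t)) =
      ∑ m ∈ Nat.divisors t, Nat.card {c : Quot (shiftRel t) // minAP t c = m} := by
  classical
  haveI : NeZero (2 * t) := ⟨by omega⟩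
  haveI : Finite ↥(Tset t) := (finite_Tset ht).to_subtype
  haveI : Fintype (Quot (shiftRel t)) := Fintype.ofFinite _
  rw [Nat.card_eq_fintype_card, ← Finset.card_univ,
    Finset.card_eq_sum_card_fiberwise (f := minAP t) (t := Nat.divisors t)
      (fun c _ => Nat.mem_divisors.mpr ⟨(minAP_spec c).1, ht⟩)]
  refine Finset.sum_congr rfl fun m _ => ?_
  rw [Nat.card_eq_fintype_card, Fintype.card_subtype]

lemma main_lower (ht : t ≠ 0) : 2 ^ t ≤ Icount t * (2 * t) :=
  le_trans (lower_card ht) (card_Tset_le ht)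

lemma main_upper (ht : t ≠ 0) :
    (Icount t : ℝ) ≤ ∑ m ∈ Nat.divisors t, (2 : ℝ) ^ m / (2 * m) := by
  rw [Icount, card_quot_sum ht]
  push_cast
  refine Finset.sum_le_sum fun m hm => ?_
  have hm0 : m ≠ 0 := (Nat.pos_of_mem_divisors hm).ne'
  have hf := fiber_card ht (m := m) hm0
  have h2m : (0 : ℝ) < 2 * m := by
    have : 0 < m := Nat.pos_of_ne_zero hm0
    positivity
  rw [le_div_iff₀ h2m]
  exact_mod_cast hf

lemma properDivisors_sum_le (ht : t ≠ 0) :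
    ∑ k ∈ Nat.properDivisors t, (2 : ℝ) ^ k ≤ 2 ^ (t / 2 + 1) := by
  have hsub : Nat.properDivisors t ⊆ Finset.range (t / 2 + 1) := by
    intro k hk
    rw [Finset.mem_range]
    rw [Nat.mem_properDivisors] at hk
    obtain ⟨⟨c, hc⟩, hlt⟩ := hk
    have hc2 : 2 ≤ c := by
      rcases Nat.lt_or_ge c 2 with h | h
      · interval_cases c <;> omega
      · exact h
    have h2k : 2 * k ≤ t := by
      calc 2 * k = k * 2 := by ring
        _ ≤ k * c := Nat.mul_le_mul_left k hc2
        _ = t := hc.symm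
    omega
  calc ∑ k ∈ Nat.properDivisors t, (2 : ℝ) ^ k
      ≤ ∑ k ∈ Finset.range (t / 2 + 1), (2 : ℝ) ^ k :=
        Finset.sum_le_sum_of_subset_of_nonneg hsub fun i _ _ => by positivity
    _ ≤ 2 ^ (t / 2 + 1) := by
        rw [geom_sum_eq (by norm_num : (2 : ℝ) ≠ 1)]
        norm_num

lemma divisors_sum_le (ht : t ≠ 0) :
    ∑ m ∈ Nat.divisors t, (2 : ℝ) ^ m / (2 * m) ≤ 2 ^ t / (2 * t) + 2 ^ (t / 2 + 1) := by
  rw [← Nat.insert_self_properDivisors ht,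
    Finset.sum_insert Nat.self_notMem_properDivisors]
  refine add_le_add (le_refl _) ?_
  refine le_trans (Finset.sum_le_sum fun m hm => ?_) (properDivisors_sum_le ht)
  have hm0 : 0 < m := Nat.pos_of_mem_properDivisors hm
  have h1 : (1 : ℝ) ≤ 2 * m := by
    have : (1 : ℝ) ≤ (m : ℝ) := by exact_mod_cast hm0
    linarith
  exact div_le_self (by positivity) h1

end Aux

/-- `(2^t - Σ_{k∣t,k≠t} 2^k)/(2t) ≤ I(t) ≤ Σ_{m∣t} 2^m/(2m)`, and
consequently `I(t) ~ 2^{t-1}/t` as `t → ∞`. -/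
theorem stmt11 :
    (∀ t : ℕ, 1 ≤ t →
      ((2 : ℝ) ^ (t : ℕ) - ∑ k ∈ Nat.properDivisors t, (2 : ℝ) ^ (k : ℕ)) / (2 * t) ≤
          (Icount t : ℝ) ∧
      (Icount t : ℝ) ≤ ∑ m ∈ Nat.divisors t, (2 : ℝ) ^ (m : ℕ) / (2 * m)) ∧
    Filter.Tendsto
      (fun t : ℕ => (Icount t : ℝ) / ((2 : ℝ) ^ (t : ℕ) / (2 * t)))
      Filter.atTop (nhds 1) := by
  have hlow : ∀ t : ℕ, 1 ≤ t → (2 : ℝ) ^ t ≤ (Icount t : ℝ) * (2 * t) := by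
    intro t ht
    have := main_lower (t := t) (by omega)
    calc (2 : ℝ) ^ t = ((2 ^ t : ℕ) : ℝ) := by push_cast; ring
      _ ≤ ((Icount t * (2 * t) : ℕ) : ℝ) := by exact_mod_cast this
      _ = (Icount t : ℝ) * (2 * t) := by push_cast; ring
  have h2t : ∀ t : ℕ, 1 ≤ t → (0 : ℝ) < 2 * t := by
    intro t ht
    have : (1 : ℝ) ≤ (t : ℝ) := by exact_mod_cast ht
    linarith
  have hmain : ∀ t : ℕ, 1 ≤ t →
      ((2 : ℝ) ^ (t : ℕ) - ∑ k ∈ Nat.properDivisors t, (2 : ℝ) ^ (k : ℕ)) / (2 * t) ≤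
          (Icount t : ℝ) ∧
      (Icount t : ℝ) ≤ ∑ m ∈ Nat.divisors t, (2 : ℝ) ^ (m : ℕ) / (2 * m) := by
    intro t ht
    constructor
    · rw [div_le_iff₀ (h2t t ht)]
      have hS : (0 : ℝ) ≤ ∑ k ∈ Nat.properDivisors t, (2 : ℝ) ^ k :=
        Finset.sum_nonneg fun k _ => by positivity
      have := hlow t ht
      linarith
    · exact main_upper (by omega)
  refine ⟨hmain, ?_⟩
  -- the squeeze
  have hhalf : Filter.Tendsto (fun t : ℕ => t / 2) Filter.atTop Filter.atTop :=
    Filter.tendsto_atTop_atTop.mpr fun b => ⟨2 * b, fun a ha => by omega⟩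
  have haux : Filter.Tendsto (fun s : ℕ => (2 * (s : ℝ) + 1) * (1 / 2 : ℝ) ^ s)
      Filter.atTop (nhds 0) := by
    have h1 : Filter.Tendsto (fun s : ℕ => (s : ℝ) * (1 / 2 : ℝ) ^ s)
        Filter.atTop (nhds 0) :=
      tendsto_self_mul_const_pow_of_lt_one (by norm_num) (by norm_num)
    have h2 : Filter.Tendsto (fun s : ℕ => ((1 / 2 : ℝ) ^ s))
        Filter.atTop (nhds 0) :=
      tendsto_pow_atTop_nhds_zero_of_lt_one (by norm_num) (by norm_num)
    have := ((h1.const_mul 2).add h2)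
    simpa [mul_assoc, add_mul, mul_comm, mul_left_comm] using this
  have hkey : Filter.Tendsto (fun t : ℕ => (t : ℝ) * (1 / 2 : ℝ) ^ (t / 2))
      Filter.atTop (nhds 0) := by
    apply squeeze_zero (fun t => by positivity)
      (g := fun t : ℕ => (2 * ((t / 2 : ℕ) : ℝ) + 1) * (1 / 2 : ℝ) ^ (t / 2))
    · intro t
      have hle : (t : ℝ) ≤ 2 * ((t / 2 : ℕ) : ℝ) + 1 := by
        have : t ≤ 2 * (t / 2) + 1 := by omega
        exact_mod_cast this
      have hpow : (0 : ℝ) ≤ (1 / 2 : ℝ) ^ (t / 2) := by positivity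
      nlinarith
    · exact haux.comp hhalf
  have hub : ∀ᶠ t : ℕ in Filter.atTop,
      (Icount t : ℝ) / ((2 : ℝ) ^ t / (2 * t)) ≤ 1 + 8 * ((t : ℝ) * (1 / 2 : ℝ) ^ (t / 2)) := by
    filter_upwards [Filter.eventually_ge_atTop 1] with t ht
    have hX : (0 : ℝ) < (2 : ℝ) ^ t / (2 * t) := by positivity
    have hC : (Icount t : ℝ) ≤ (2 : ℝ) ^ t / (2 * t) + 2 ^ (t / 2 + 1) :=
      le_trans (main_upper (by omega)) (divisors_sum_le (by omega))
    have step1 : (Icount t : ℝ) / ((2 : ℝ) ^ t / (2 * t)) ≤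
        ((2 : ℝ) ^ t / (2 * t) + 2 ^ (t / 2 + 1)) / ((2 : ℝ) ^ t / (2 * t)) := by
      gcongr
    have step2 : ((2 : ℝ) ^ t / (2 * t) + 2 ^ (t / 2 + 1)) / ((2 : ℝ) ^ t / (2 * t)) =
        1 + 2 ^ (t / 2 + 1) / ((2 : ℝ) ^ t / (2 * t)) := by
      rw [add_div, div_self hX.ne']
    have step3 : (2 : ℝ) ^ (t / 2 + 1) / ((2 : ℝ) ^ t / (2 * t)) ≤
        8 * ((t : ℝ) * (1 / 2 : ℝ) ^ (t / 2)) := by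
      rw [div_div_eq_mul_div, div_le_iff₀ (by positivity : (0 : ℝ) < (2 : ℝ) ^ t)]
      have hps : (1 / 2 : ℝ) ^ (t / 2) * 2 ^ (t / 2) = 1 := by
        rw [← mul_pow]; norm_num
      have h2pow : (2 : ℝ) ^ (t / 2) * 2 ^ (t / 2) ≤ 2 ^ t := by
        rw [← pow_add]
        exact pow_le_pow_right₀ (by norm_num) (by omega)
      have ha : (0 : ℝ) < (2 : ℝ) ^ (t / 2) := by positivity
      have hb : (0 : ℝ) < (1 / 2 : ℝ) ^ (t / 2) := by positivity
      have ht1 : (1 : ℝ) ≤ (t : ℝ) := by exact_mod_cast ht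
      have hmul := mul_le_mul_of_nonneg_left h2pow
        (show (0 : ℝ) ≤ 8 * (t : ℝ) * (1 / 2 : ℝ) ^ (t / 2) by positivity)
      rw [pow_succ]
      have e1 : 8 * (t : ℝ) * (1 / 2 : ℝ) ^ (t / 2) * (2 ^ (t / 2) * 2 ^ (t / 2)) =
          8 * (t : ℝ) * 2 ^ (t / 2) := by
        calc 8 * (t : ℝ) * (1 / 2 : ℝ) ^ (t / 2) * (2 ^ (t / 2) * 2 ^ (t / 2))
            = 8 * (t : ℝ) * 2 ^ (t / 2) * ((1 / 2 : ℝ) ^ (t / 2) * 2 ^ (t / 2)) := by ring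
          _ = 8 * (t : ℝ) * 2 ^ (t / 2) := by rw [hps, mul_one]
      have hta : (0 : ℝ) ≤ (t : ℝ) * 2 ^ (t / 2) := by positivity
      linarith [hmul, e1, hta]
    calc (Icount t : ℝ) / ((2 : ℝ) ^ t / (2 * t))
        ≤ 1 + 2 ^ (t / 2 + 1) / ((2 : ℝ) ^ t / (2 * t)) := by rw [← step2]; exact step1
      _ ≤ 1 + 8 * ((t : ℝ) * (1 / 2 : ℝ) ^ (t / 2)) := by linarith
  have hlb : ∀ᶠ t : ℕ in Filter.atTop,
      (1 : ℝ) ≤ (Icount t : ℝ) / ((2 : ℝ) ^ t / (2 * t)) := by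
    filter_upwards [Filter.eventually_ge_atTop 1] with t ht
    have hX : (0 : ℝ) < (2 : ℝ) ^ t / (2 * t) := by positivity
    rw [one_le_div hX, div_le_iff₀ (h2t t ht)]
    exact hlow t ht
  have hupperlim : Filter.Tendsto
      (fun t : ℕ => 1 + 8 * ((t : ℝ) * (1 / 2 : ℝ) ^ (t / 2))) Filter.atTop (nhds 1) := by
    have h1 := hkey.const_mul (8 : ℝ)
    have h2 : Filter.Tendsto (fun _ : ℕ => (1 : ℝ)) Filter.atTop (nhds 1) := tendsto_const_nhds
    have h3 := h2.add h1
    simpa using h3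
  exact tendsto_of_tendsto_of_tendsto_of_le_of_le' tendsto_const_nhds hupperlim hlb hub
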